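/- arXiv:0911.5179 — 3 statements merged into one kernel-verified Lean document; each statement's English description precedes it below -/
import Mathlib

section
/- Let a ∈ [−1, 0) and let f : (a, ∞) → ℝ be twice differentiable with f″(p) < 0 and f′(p) > 0 for all p ∈ (a, ∞), and with f(0) = 0. Suppose p̄ ∈ (a, ∞) satisfies (p̄+1)·f′(p̄) = f(p̄). Then: (i) p̄ > 0 and p̄ is the unique solution in (a, ∞) of (p+1)·f′(p) = f(p); (ii) (p+1)·f′(p) − f(p) > 0 for all p ∈ (a, p̄) and (p+1)·f′(p) − f(p) < 0 for all p > p̄; (iii) the function c(p) := f(p)/(p+1) is strictly increasing on (a, p̄], strictly decreasing on [p̄, ∞), attains its unique global maximum on (a, ∞) at p̄, and this maximum value equals f′(p̄). -/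
open Set

theorem statement1 (a : ℝ) (ha : -1 ≤ a) (ha' : a < 0)
    (f f' f'' : ℝ → ℝ)
    (hder : ∀ p ∈ Ioi a, HasDerivAt f (f' p) p)
    (hder' : ∀ p ∈ Ioi a, HasDerivAt f' (f'' p) p)
    (hconc : ∀ p ∈ Ioi a, f'' p < 0)
    (hincr : ∀ p ∈ Ioi a, 0 < f' p)
    (hf0 : f 0 = 0)
    (pbar : ℝ) (hpbar : pbar ∈ Ioi a)
    (heq : (pbar + 1) * f' pbar = f pbar) :
    (0 < pbar ∧ ∀ p ∈ Ioi a, (p + 1) * f' p = f p → p = pbar) ∧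
    (∀ p, a < p → p < pbar → 0 < (p + 1) * f' p - f p) ∧
    (∀ p, pbar < p → (p + 1) * f' p - f p < 0) ∧
    StrictMonoOn (fun p => f p / (p + 1)) (Ioc a pbar) ∧
    StrictAntiOn (fun p => f p / (p + 1)) (Ici pbar) ∧
    (∀ p ∈ Ioi a, p ≠ pbar → f p / (p + 1) < f pbar / (pbar + 1)) ∧
    f pbar / (pbar + 1) = f' pbar := by
  set g : ℝ → ℝ := fun p => (p + 1) * f' p - f p with hg
  have hpos1 : ∀ p ∈ Ioi a, (0:ℝ) < p + 1 := fun p hp => by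
    have : a < p := hp
    linarith
  have hgder : ∀ p ∈ Ioi a, HasDerivAt g ((p + 1) * f'' p) p := by
    intro p hp
    have h1 : HasDerivAt (fun p : ℝ => (p + 1) * f' p)
        (1 * f' p + (p + 1) * f'' p) p :=
      ((hasDerivAt_id p).add_const 1).mul (hder' p hp)
    have := h1.sub (hder p hp)
    exact this.congr_deriv (by ring)
  have hgcont : ContinuousOn g (Ioi a) := fun p hp =>
    (hgder p hp).continuousAt.continuousWithinAt
  have hganti : StrictAntiOn g (Ioi a) := by
    apply strictAntiOn_of_deriv_neg (convex_Ioi a) hgcont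
    intro p hp
    rw [interior_Ioi] at hp
    rw [(hgder p hp).deriv]
    exact mul_neg_of_pos_of_neg (hpos1 p hp) (hconc p hp)
  have hgpbar : g pbar = 0 := by simp [g, heq]
  have h0 : (0:ℝ) ∈ Ioi a := ha'
  have hg0 : 0 < g 0 := by
    have := hincr 0 h0
    simp [g, hf0]
    linarith
  have hpbar0 : 0 < pbar := by
    by_contra h
    push_neg at h
    rcases lt_or_eq_of_le h with h | h
    · have := hganti hpbar h0 h
      rw [hgpbar] at this; linarith
    · subst h; rw [hgpbar] at hg0; exact lt_irrefl _ hg0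
  have hsign1 : ∀ p, a < p → p < pbar → 0 < g p := by
    intro p hap hpp
    have := hganti hap hpbar hpp
    rwa [hgpbar] at this
  have hsign2 : ∀ p, pbar < p → g p < 0 := by
    intro p hpp
    have hap : a < p := lt_trans hpbar hpp
    have := hganti hpbar hap hpp
    rwa [hgpbar] at this
  have huniq : ∀ p ∈ Ioi a, (p + 1) * f' p = f p → p = pbar := by
    intro p hp hpeq
    have hgp : g p = 0 := by simp [g, hpeq]
    rcases lt_trichotomy p pbar with h | h | h
    · have := hsign1 p hp h; rw [hgp] at this; linarith
    · exact h
    · have := hsign2 p h; rw [hgp] at this; linarith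
  -- derivative of c
  have hcder : ∀ p ∈ Ioi a, HasDerivAt (fun p => f p / (p + 1))
      (g p / (p + 1) ^ 2) p := by
    intro p hp
    have hne : p + 1 ≠ 0 := ne_of_gt (hpos1 p hp)
    have h1 : HasDerivAt (fun p : ℝ => p + 1) 1 p := (hasDerivAt_id p).add_const 1
    have := (hder p hp).div h1 hne
    exact this.congr_deriv (by simp only [g]; ring)
  have hccont : ContinuousOn (fun p => f p / (p + 1)) (Ioi a) := fun p hp =>
    (hcder p hp).continuousAt.continuousWithinAt
  have hsub1 : Ioc a pbar ⊆ Ioi a := Ioc_subset_Ioi_self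
  have hsub2 : Ici pbar ⊆ Ioi a := Ici_subset_Ioi.mpr hpbar
  have hmono : StrictMonoOn (fun p => f p / (p + 1)) (Ioc a pbar) := by
    apply strictMonoOn_of_deriv_pos (convex_Ioc a pbar) (hccont.mono hsub1)
    intro p hp
    rw [interior_Ioc] at hp
    rw [(hcder p (hsub1 (Ioo_subset_Ioc_self hp))).deriv]
    exact div_pos (hsign1 p hp.1 hp.2) (pow_pos (hpos1 p hp.1) 2)
  have hanti : StrictAntiOn (fun p => f p / (p + 1)) (Ici pbar) := by
    apply strictAntiOn_of_deriv_neg (convex_Ici pbar) (hccont.mono hsub2)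
    intro p hp
    rw [interior_Ici] at hp
    have hap : a < p := lt_trans hpbar hp
    rw [(hcder p hap).deriv]
    exact div_neg_of_neg_of_pos (hsign2 p hp) (pow_pos (hpos1 p hap) 2)
  have hmax : ∀ p ∈ Ioi a, p ≠ pbar → f p / (p + 1) < f pbar / (pbar + 1) := by
    intro p hp hne
    rcases lt_or_gt_of_ne hne with h | h
    · exact hmono ⟨hp, le_of_lt h⟩ ⟨hpbar, le_refl _⟩ h
    · exact hanti (Set.mem_Ici.mpr (le_refl _)) (le_of_lt h) h
  have hval : f pbar / (pbar + 1) = f' pbar := by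
    rw [← heq]
    field_simp
  exact ⟨⟨hpbar0, huniq⟩, fun p h1 h2 => hsign1 p h1 h2,
    fun p h => hsign2 p h, hmono, hanti, hmax, hval⟩
end

section
/- Let m be a σ-finite measure on (0, ∞), let p > 0, ε > 0 and η > 0, and suppose that z ↦ 1 − e^{−(p−ε)z}, z ↦ 1 − e^{−pz} and z ↦ 1 − e^{−(p+η)z} are all m-integrable. Write m̄(x) = ∫_{(x,∞)} e^{−pz} m(dz) for x > 0. Then ∫₀^∞ e^{εx} ( m̄(x) − η ∫_x^∞ e^{−η(y−x)} m̄(y) dy ) dx = (Φ_m(p+η) − Φ_m(p−ε))/(η+ε), all integrals involved being absolutely convergent. -/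
open MeasureTheory Set

noncomputable section

/-- Laplace exponent Φ_m(θ) = ∫_{(0,∞)} (1 − e^{−θz}) m(dz). -/
def PhiM (m : Measure ℝ) (θ : ℝ) : ℝ :=
  ∫ z in Ioi (0 : ℝ), (1 - Real.exp (-θ * z)) ∂m

/-- m̄(x) = ∫_{(x,∞)} e^{−pz} m(dz). -/
def mBar (m : Measure ℝ) (p x : ℝ) : ℝ :=
  ∫ z in Ioi x, Real.exp (-p * z) ∂m

lemma exp_int_Ioo {c : ℝ} (hc : c ≠ 0) (d a b : ℝ) (hab : a ≤ b) :
    ∫ y in Ioo a b, Real.exp (c * y + d)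
      = (Real.exp (c * b + d) - Real.exp (c * a + d)) / c := by
  have hD : ∀ y : ℝ, HasDerivAt (fun y => Real.exp (c * y + d) / c)
      (Real.exp (c * y + d)) y := by
    intro y
    have h1 : HasDerivAt (fun y : ℝ => c * y + d) c y := by
      simpa using ((hasDerivAt_id y).const_mul c).add_const d
    have h2 := h1.exp.div_const c
    simpa [mul_div_assoc, div_self hc] using h2
  have hcont : Continuous fun y => Real.exp (c * y + d) := by continuity
  have := intervalIntegral.integral_eq_sub_of_hasDerivAt (f := fun y => Real.exp (c * y + d) / c)
    (fun y _ => hD y) (hcont.intervalIntegrable a b)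
  rw [intervalIntegral.integral_of_le hab, MeasureTheory.integral_Ioc_eq_integral_Ioo] at this
  rw [this]; ring

lemma tail_finite (m : Measure ℝ) {p : ℝ} (hp : 0 < p)
    (h2 : IntegrableOn (fun z => 1 - Real.exp (-p * z)) (Ioi 0) m)
    {x : ℝ} (hx : 0 < x) : m (Ioi x) < ⊤ := by
  have hc : 0 < 1 - Real.exp (-p * x) := by
    have : Real.exp (-p * x) < 1 := by
      rw [Real.exp_lt_one_iff]; nlinarith
    linarith
  have h := h2.measure_ge_lt_top hc
  refine lt_of_le_of_lt ?_ h
  rw [Measure.restrict_apply' measurableSet_Ioi]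
  refine measure_mono fun z hz => ?_
  have hz' : x < z := hz
  refine ⟨?_, lt_trans hx hz'⟩
  have : Real.exp (-p * z) ≤ Real.exp (-p * x) := by
    apply Real.exp_le_exp.mpr; nlinarith
  simp only [mem_setOf_eq]; linarith

lemma tail_exp_integrable (m : Measure ℝ) {θ : ℝ} (hθ : 0 < θ)
    {x : ℝ} (hx : 0 < x) (hfin : m (Ioi x) < ⊤) :
    IntegrableOn (fun z => Real.exp (-θ * z)) (Ioi x) m := by
  refine Measure.integrableOn_of_bounded (M := 1) hfin.ne ?_ ?_
  · exact (Real.continuous_exp.comp (by continuity)).aestronglyMeasurable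
  · refine ae_restrict_of_forall_mem measurableSet_Ioi fun z hz => ?_
    have hz' : x < z := hz
    rw [Real.norm_eq_abs, abs_of_pos (Real.exp_pos _)]
    rw [show (1:ℝ) = Real.exp 0 by simp]
    apply Real.exp_le_exp.mpr; nlinarith

lemma stepA (m : Measure ℝ) [SigmaFinite m] {p η : ℝ} (hη : 0 < η) {x : ℝ}
    (hIp : IntegrableOn (fun z => Real.exp (-p * z)) (Ioi x) m) :
    IntegrableOn (fun y => Real.exp (-η * (y - x)) * mBar m p y) (Ioi x) volume ∧
    mBar m p x - η * ∫ y in Ioi x, Real.exp (-η * (y - x)) * mBar m p y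
      = Real.exp (η * x) * ∫ z in Ioi x, Real.exp (-(p + η) * z) ∂m := by
  have hS : MeasurableSet {q : ℝ × ℝ | q.1 < q.2} :=
    measurableSet_lt measurable_fst measurable_snd
  set F : ℝ × ℝ → ℝ := fun q => Real.exp (-η * (q.1 - x)) * Real.exp (-p * q.2) with hF
  set g : ℝ × ℝ → ℝ := {q : ℝ × ℝ | q.1 < q.2}.indicator F with hg
  have hFcont : Continuous F := by fun_prop
  have hgm : AEStronglyMeasurable g ((volume.restrict (Ioi x)).prod (m.restrict (Ioi x))) :=
    (hFcont.stronglyMeasurable.indicator hS).aestronglyMeasurable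
  have hf1 : Integrable (fun y => Real.exp (-η * (y - x))) (volume.restrict (Ioi x)) := by
    have h0 : IntegrableOn (fun y => Real.exp (η * x) * Real.exp (-η * y)) (Ioi x) volume :=
      (exp_neg_integrableOn_Ioi x hη).const_mul _
    refine h0.congr_fun (fun y _ => ?_) measurableSet_Ioi
    dsimp only; rw [← Real.exp_add]; ring_nf
  have hFint : Integrable F ((volume.restrict (Ioi x)).prod (m.restrict (Ioi x))) :=
    hf1.mul_prod hIp
  have hgint : Integrable g ((volume.restrict (Ioi x)).prod (m.restrict (Ioi x))) := by
    refine hFint.mono' hgm (Filter.Eventually.of_forall fun q => ?_)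
    calc ‖g q‖ ≤ ‖F q‖ := norm_indicator_le_norm_self F q
      _ = F q := by rw [Real.norm_eq_abs, abs_of_nonneg (by positivity)]
  have hyEq : ∀ y ∈ Ioi x, (∫ z in Ioi x, g (y, z) ∂m)
      = Real.exp (-η * (y - x)) * mBar m p y := by
    intro y hy
    have h1 : (fun z => g (y, z))
        = (Ioi y).indicator (fun z => Real.exp (-η * (y - x)) * Real.exp (-p * z)) := by
      funext z
      by_cases h : y < z <;> simp [hg, hF, Set.indicator, h, Set.mem_Ioi]
    rw [h1, setIntegral_indicator measurableSet_Ioi,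
      show Ioi x ∩ Ioi y = Ioi y by rw [Set.Ioi_inter_Ioi, sup_eq_right.mpr (le_of_lt hy)],
      integral_const_mul]
    rfl
  have hzEq : ∀ z ∈ Ioi x, (∫ y in Ioi x, g (y, z))
      = Real.exp (-p * z) * ((1 - Real.exp (-η * (z - x))) / η) := by
    intro z hz
    have h1 : (fun y => g (y, z))
        = (Iio z).indicator (fun y => Real.exp (-η * (y - x)) * Real.exp (-p * z)) := by
      funext y
      by_cases h : y < z <;> simp [hg, hF, Set.indicator, h, Set.mem_Iio]
    rw [h1, setIntegral_indicator measurableSet_Iio,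
      show Ioi x ∩ Iio z = Ioo x z from Set.Ioi_inter_Iio, integral_mul_const]
    have h2 : EqOn (fun y => Real.exp (-η * (y - x))) (fun y => Real.exp (-η * y + η * x))
        (Ioo x z) := fun y _ => by ring_nf
    rw [setIntegral_congr_fun measurableSet_Ioo h2,
      exp_int_Ioo (neg_ne_zero.mpr hη.ne') (η * x) x z (le_of_lt hz)]
    have hη' : η ≠ 0 := hη.ne'
    rw [show -η * (z - x) = -η * z + η * x by ring,
      show -η * x + η * x = 0 by ring, Real.exp_zero, div_neg, ← neg_div, neg_sub]
    ring
  have hswap := integral_integral_swap (μ := volume.restrict (Ioi x))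
    (ν := m.restrict (Ioi x)) (f := fun y z => g (y, z)) hgint
  have hmarg : Integrable (fun y => ∫ z in Ioi x, g (y, z) ∂m) (volume.restrict (Ioi x)) :=
    hgint.integral_prod_left
  have hint2 : IntegrableOn (fun y => Real.exp (-η * (y - x)) * mBar m p y) (Ioi x) volume :=
    hmarg.congr (ae_restrict_of_forall_mem measurableSet_Ioi fun y hy => hyEq y hy)
  refine ⟨hint2, ?_⟩
  have e1 : ∫ y in Ioi x, Real.exp (-η * (y - x)) * mBar m p y
      = ∫ z in Ioi x, Real.exp (-p * z) * ((1 - Real.exp (-η * (z - x))) / η) ∂m := by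
    rw [setIntegral_congr_fun measurableSet_Ioi (fun y hy => (hyEq y hy).symm)]
    rw [hswap]
    exact setIntegral_congr_fun measurableSet_Ioi hzEq
  rw [e1, ← integral_const_mul]
  have e2 : EqOn (fun z => η * (Real.exp (-p * z) * ((1 - Real.exp (-η * (z - x))) / η)))
      (fun z => Real.exp (-p * z) * (1 - Real.exp (-η * (z - x)))) (Ioi x) := by
    intro z _
    field_simp
  rw [setIntegral_congr_fun measurableSet_Ioi e2]
  have hI2 : IntegrableOn (fun z => Real.exp (-p * z) * (1 - Real.exp (-η * (z - x))))
      (Ioi x) m := by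
    refine hIp.mono' ?_ ?_
    · exact (by fun_prop : Continuous fun z =>
        Real.exp (-p * z) * (1 - Real.exp (-η * (z - x)))).aestronglyMeasurable
    · refine ae_restrict_of_forall_mem measurableSet_Ioi fun z hz => ?_
      have h1 : Real.exp (-η * (z - x)) ≤ 1 := by
        rw [show (1:ℝ) = Real.exp 0 by simp]
        apply Real.exp_le_exp.mpr; nlinarith [mem_Ioi.mp hz]
      have h2 : (0:ℝ) < Real.exp (-η * (z - x)) := Real.exp_pos _
      rw [Real.norm_eq_abs, abs_of_nonneg (by nlinarith [Real.exp_pos (-p * z)])]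
      nlinarith [Real.exp_pos (-p * z)]
  have : mBar m p x = ∫ z in Ioi x, Real.exp (-p * z) ∂m := rfl
  rw [this, ← integral_sub hIp hI2]
  have e3 : EqOn (fun z => Real.exp (-p * z) - Real.exp (-p * z) * (1 - Real.exp (-η * (z - x))))
      (fun z => Real.exp (η * x) * Real.exp (-(p + η) * z)) (Ioi x) := by
    intro z _
    simp only
    have : Real.exp (-p * z) - Real.exp (-p * z) * (1 - Real.exp (-η * (z - x)))
        = Real.exp (-p * z) * Real.exp (-η * (z - x)) := by ring
    rw [this, ← Real.exp_add, ← Real.exp_add]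
    ring_nf
  rw [setIntegral_congr_fun measurableSet_Ioi e3, integral_const_mul]

theorem statement5 (m : Measure ℝ) [SigmaFinite m] (hm0 : m (Iic 0) = 0)
    (p ε η : ℝ) (hp : 0 < p) (hε : 0 < ε) (hη : 0 < η)
    (h1 : IntegrableOn (fun z => 1 - Real.exp (-(p - ε) * z)) (Ioi 0) m)
    (h2 : IntegrableOn (fun z => 1 - Real.exp (-p * z)) (Ioi 0) m)
    (h3 : IntegrableOn (fun z => 1 - Real.exp (-(p + η) * z)) (Ioi 0) m) :
    (∀ x > (0 : ℝ), IntegrableOn (fun z => Real.exp (-p * z)) (Ioi x) m) ∧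
    (∀ x > (0 : ℝ), IntegrableOn
        (fun y => Real.exp (-η * (y - x)) * mBar m p y) (Ioi x) volume) ∧
    IntegrableOn
      (fun x => Real.exp (ε * x) *
        (mBar m p x - η * ∫ y in Ioi x, Real.exp (-η * (y - x)) * mBar m p y))
      (Ioi 0) volume ∧
    ∫ x in Ioi (0 : ℝ), Real.exp (ε * x) *
        (mBar m p x - η * ∫ y in Ioi x, Real.exp (-η * (y - x)) * mBar m p y)
      = (PhiM m (p + η) - PhiM m (p - ε)) / (η + ε) := by
  have hIp : ∀ x : ℝ, 0 < x → IntegrableOn (fun z => Real.exp (-p * z)) (Ioi x) m :=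
    fun x hx => tail_exp_integrable m hp hx (tail_finite m hp h2 hx)
  have hA := fun (x : ℝ) (hx : 0 < x) => stepA m hη (hIp x hx)
  -- the outer Fubini
  have hS : MeasurableSet {q : ℝ × ℝ | q.1 < q.2} :=
    measurableSet_lt measurable_fst measurable_snd
  set G : ℝ × ℝ → ℝ := fun q => Real.exp ((ε + η) * q.1) * Real.exp (-(p + η) * q.2) with hG
  set h : ℝ × ℝ → ℝ := {q : ℝ × ℝ | q.1 < q.2}.indicator G with hh
  have hGcont : Continuous G := by fun_prop
  have hm' : AEStronglyMeasurable h ((volume.restrict (Ioi 0)).prod (m.restrict (Ioi 0))) :=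
    (hGcont.stronglyMeasurable.indicator hS).aestronglyMeasurable
  have hnn : ∀ q, 0 ≤ h q := fun q =>
    Set.indicator_nonneg (fun q _ => by positivity) q
  have hslice : ∀ z ∈ Ioi (0 : ℝ),
      IntegrableOn (fun x => h (x, z)) (Ioi 0) volume ∧
      ∫ x in Ioi (0 : ℝ), h (x, z)
        = (Real.exp (-(p - ε) * z) - Real.exp (-(p + η) * z)) / (ε + η) := by
    intro z hz
    have hz' : (0 : ℝ) < z := hz
    have h1' : (fun x => h (x, z))
        = (Iio z).indicator (fun x => Real.exp ((ε + η) * x) * Real.exp (-(p + η) * z)) := by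
      funext xx
      by_cases hc : xx < z <;> simp [hh, hG, Set.indicator, hc, Set.mem_Iio]
    have hφ : IntegrableOn (fun x => Real.exp ((ε + η) * x) * Real.exp (-(p + η) * z)) (Iio z)
        (volume.restrict (Ioi 0)) := by
      rw [IntegrableOn, Measure.restrict_restrict measurableSet_Iio,
        show Iio z ∩ Ioi 0 = Ioo 0 z from Set.Iio_inter_Ioi]
      exact ((by fun_prop : Continuous fun x =>
        Real.exp ((ε + η) * x) * Real.exp (-(p + η) * z)).integrableOn_Icc).mono_set
        Ioo_subset_Icc_self
    constructor
    · rw [h1']; exact hφ.integrable_indicator measurableSet_Iio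
    · rw [h1', setIntegral_indicator measurableSet_Iio,
        show Ioi 0 ∩ Iio z = Ioo 0 z from Set.Ioi_inter_Iio, integral_mul_const]
      have h2' : EqOn (fun x => Real.exp ((ε + η) * x))
          (fun x => Real.exp ((ε + η) * x + 0)) (Ioo 0 z) := fun x _ => by ring_nf
      rw [setIntegral_congr_fun measurableSet_Ioo h2',
        exp_int_Ioo (show (ε + η) ≠ 0 by positivity) 0 0 z (le_of_lt hz')]
      rw [show (ε + η) * 0 + 0 = 0 by ring, Real.exp_zero]
      rw [div_mul_eq_mul_div, sub_mul, one_mul, ← Real.exp_add,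
        show (ε + η) * z + 0 + -(p + η) * z = -(p - ε) * z by ring]
  have hK : IntegrableOn
      (fun z => (Real.exp (-(p - ε) * z) - Real.exp (-(p + η) * z)) / (ε + η)) (Ioi 0) m := by
    have h0 : IntegrableOn
        (fun z => ((1 - Real.exp (-(p + η) * z)) - (1 - Real.exp (-(p - ε) * z))) / (ε + η))
        (Ioi 0) m := by
      have := (h3.sub h1).div_const (ε + η)
      exact this
    refine h0.congr_fun (fun z _ => ?_) measurableSet_Ioi
    ring
  have hKnn : ∀ z ∈ Ioi (0 : ℝ),
      0 ≤ (Real.exp (-(p - ε) * z) - Real.exp (-(p + η) * z)) / (ε + η) := by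
    intro z hz
    have hz' : (0 : ℝ) < z := hz
    have : Real.exp (-(p + η) * z) ≤ Real.exp (-(p - ε) * z) := by
      apply Real.exp_le_exp.mpr; nlinarith
    apply div_nonneg (by linarith) (by positivity)
  have hhint : Integrable h ((volume.restrict (Ioi 0)).prod (m.restrict (Ioi 0))) := by
    refine ⟨hm', ?_⟩
    rw [hasFiniteIntegral_iff_ofReal (Filter.Eventually.of_forall hnn)]
    have hmeas : Measurable fun q => ENNReal.ofReal (h q) :=
      ENNReal.measurable_ofReal.comp (hGcont.measurable.indicator hS)
    rw [lintegral_prod_symm _ hmeas.aemeasurable]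
    have key : ∀ᵐ z ∂(m.restrict (Ioi 0)),
        (∫⁻ x, ENNReal.ofReal (h (x, z)) ∂(volume.restrict (Ioi 0)))
          = ENNReal.ofReal ((Real.exp (-(p - ε) * z) - Real.exp (-(p + η) * z)) / (ε + η)) := by
      refine ae_restrict_of_forall_mem measurableSet_Ioi fun z hz => ?_
      rw [← ofReal_integral_eq_lintegral_ofReal (hslice z hz).1
        (Filter.Eventually.of_forall fun x => hnn (x, z)), (hslice z hz).2]
    rw [lintegral_congr_ae key,
      ← ofReal_integral_eq_lintegral_ofReal hK
        (ae_restrict_of_forall_mem measurableSet_Ioi hKnn)]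
    exact ENNReal.ofReal_lt_top
  have hxEq : ∀ x ∈ Ioi (0 : ℝ),
      (∫ z in Ioi (0 : ℝ), h (x, z) ∂m)
        = Real.exp (ε * x) *
          (mBar m p x - η * ∫ y in Ioi x, Real.exp (-η * (y - x)) * mBar m p y) := by
    intro x hx
    have h1' : (fun z => h (x, z))
        = (Ioi x).indicator (fun z => Real.exp ((ε + η) * x) * Real.exp (-(p + η) * z)) := by
      funext z
      by_cases hc : x < z <;> simp [hh, hG, Set.indicator, hc, Set.mem_Ioi]
    rw [h1', setIntegral_indicator measurableSet_Ioi,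
      show Ioi 0 ∩ Ioi x = Ioi x by rw [Set.Ioi_inter_Ioi, sup_eq_right.mpr (le_of_lt hx)],
      integral_const_mul, (hA x hx).2, ← mul_assoc, ← Real.exp_add,
      show ε * x + η * x = (ε + η) * x by ring]
  have hmarg2 : Integrable (fun x => ∫ z in Ioi (0:ℝ), h (x, z) ∂m)
      (volume.restrict (Ioi 0)) := hhint.integral_prod_left
  have hint3 : IntegrableOn
      (fun x => Real.exp (ε * x) *
        (mBar m p x - η * ∫ y in Ioi x, Real.exp (-η * (y - x)) * mBar m p y))
      (Ioi 0) volume :=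
    hmarg2.congr (ae_restrict_of_forall_mem measurableSet_Ioi fun x hx => hxEq x hx)
  refine ⟨fun x hx => hIp x hx, fun x hx => (hA x hx).1, hint3, ?_⟩
  have hswap2 := integral_integral_swap (μ := volume.restrict (Ioi 0))
    (ν := m.restrict (Ioi 0)) (f := fun x z => h (x, z)) hhint
  calc ∫ x in Ioi (0 : ℝ), Real.exp (ε * x) *
        (mBar m p x - η * ∫ y in Ioi x, Real.exp (-η * (y - x)) * mBar m p y)
      = ∫ x in Ioi (0 : ℝ), (∫ z in Ioi (0 : ℝ), h (x, z) ∂m) :=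
        setIntegral_congr_fun measurableSet_Ioi (fun x hx => (hxEq x hx).symm)
    _ = ∫ z in Ioi (0 : ℝ), (∫ x in Ioi (0 : ℝ), h (x, z)) ∂m := hswap2
    _ = ∫ z in Ioi (0 : ℝ), (Real.exp (-(p - ε) * z) - Real.exp (-(p + η) * z)) / (ε + η) ∂m :=
        setIntegral_congr_fun measurableSet_Ioi (fun z hz => (hslice z hz).2)
    _ = (PhiM m (p + η) - PhiM m (p - ε)) / (η + ε) := by
        have e : EqOn
            (fun z => (Real.exp (-(p - ε) * z) - Real.exp (-(p + η) * z)) / (ε + η))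
            (fun z => ((1 - Real.exp (-(p + η) * z)) - (1 - Real.exp (-(p - ε) * z))) / (ε + η))
            (Ioi 0) := fun z _ => by simp only; ring
        rw [setIntegral_congr_fun measurableSet_Ioi e, integral_div, integral_sub h3 h1,
          show η + ε = ε + η from add_comm η ε]
        rfl
end
end

section
/- Let ν be a conservative dislocation measure on ∇₁ and let p ∈ ℝ with p + 1 > 0. Let ψ : ℝ → (0,1] be C¹ and nondecreasing with lim_{x→∞} ψ(x) = 1 and ψ′(y) ≤ (p+1)(1 − ψ(y)) for all y ∈ ℝ. Suppose there exist ε ∈ (0, p+1) and C > 0 such that 1 − ψ(x) ≤ C e^{−(p+1−ε)x} for all x ∈ ℝ and ∫_{∇₁} ∑_{i≥2} sᵢ^{p+1−ε} ν(ds) < ∞. Then the function x ↦ 𝓛ψ(x) = ∫_{∇₁} ( ∏ᵢ ψ(x − log sᵢ) − ψ(x) ) ν(ds) is continuous on ℝ; consequently, for any c ∈ ℝ, x ↦ −c ψ′(x) + 𝓛ψ(x) is continuous on ℝ. -/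
open MeasureTheory Filter Set

noncomputable section

/-- The space ∇₁ of nonincreasing sequences of nonnegative reals summing to 1. -/
def Nabla1 : Set (ℕ → ℝ) :=
  {s | (∀ i, 0 ≤ s i) ∧ (∀ i j, i ≤ j → s j ≤ s i) ∧ HasSum s 1}

/-- The infinite product ∏ᵢ ψ(x − log sᵢ), factors with sᵢ = 0 interpreted as 1, taken as
the limit of the partial products.  For ψ with values in (0,1] the partial products are
nonincreasing and bounded below by 0, so the limit exists and equals the infimum. -/
def fragProd (ψ : ℝ → ℝ) (s : ℕ → ℝ) (x : ℝ) : ℝ :=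
  ⨅ n : ℕ, ∏ i ∈ Finset.range n, (if s i = 0 then 1 else ψ (x - Real.log (s i)))


/-- The individual factor. -/
def fac (ψ : ℝ → ℝ) (s : ℕ → ℝ) (x : ℝ) (i : ℕ) : ℝ :=
  if s i = 0 then 1 else ψ (x - Real.log (s i))

lemma fragProd_eq (ψ : ℝ → ℝ) (s : ℕ → ℝ) (x : ℝ) :
    fragProd ψ s x = ⨅ n : ℕ, ∏ i ∈ Finset.range n, fac ψ s x i := rfl

section Basic

variable {ψ : ℝ → ℝ} (hψr : ∀ x, 0 < ψ x ∧ ψ x ≤ 1)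

include hψr

lemma fac_pos {s : ℕ → ℝ} {x : ℝ} {i : ℕ} : 0 < fac ψ s x i := by
  unfold fac; split
  · norm_num
  · exact (hψr _).1

lemma fac_le_one {s : ℕ → ℝ} {x : ℝ} {i : ℕ} : fac ψ s x i ≤ 1 := by
  unfold fac; split
  · exact le_refl 1
  · exact (hψr _).2

lemma partial_pos {s : ℕ → ℝ} {x : ℝ} {n : ℕ} :
    0 < ∏ i ∈ Finset.range n, fac ψ s x i :=
  Finset.prod_pos fun i _ => fac_pos hψr

lemma partial_le_one {s : ℕ → ℝ} {x : ℝ} {n : ℕ} :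
    ∏ i ∈ Finset.range n, fac ψ s x i ≤ 1 :=
  Finset.prod_le_one (fun i _ => (fac_pos hψr).le) fun i _ => fac_le_one hψr

lemma partial_antitone {s : ℕ → ℝ} {x : ℝ} :
    Antitone fun n => ∏ i ∈ Finset.range n, fac ψ s x i := by
  apply antitone_nat_of_succ_le
  intro n
  rw [Finset.prod_range_succ]
  calc (∏ i ∈ Finset.range n, fac ψ s x i) * fac ψ s x n
      ≤ (∏ i ∈ Finset.range n, fac ψ s x i) * 1 := by
        gcongr; exacts [(partial_pos hψr).le, fac_le_one hψr]
    _ = _ := mul_one _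

lemma tendsto_partial {s : ℕ → ℝ} {x : ℝ} :
    Tendsto (fun n => ∏ i ∈ Finset.range n, fac ψ s x i) atTop (nhds (fragProd ψ s x)) := by
  rw [fragProd_eq]
  exact tendsto_atTop_ciInf (partial_antitone hψr)
    ⟨0, fun y ⟨n, hn⟩ => hn ▸ (partial_pos hψr).le⟩

lemma fragProd_le_partial {s : ℕ → ℝ} {x : ℝ} (n : ℕ) :
    fragProd ψ s x ≤ ∏ i ∈ Finset.range n, fac ψ s x i := by
  rw [fragProd_eq]
  exact ciInf_le ⟨0, fun y ⟨m, hm⟩ => hm ▸ (partial_pos hψr).le⟩ n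

lemma fragProd_nonneg {s : ℕ → ℝ} {x : ℝ} : 0 ≤ fragProd ψ s x := by
  rw [fragProd_eq]
  exact le_ciInf fun n => (partial_pos hψr).le

lemma fragProd_le_one {s : ℕ → ℝ} {x : ℝ} : fragProd ψ s x ≤ 1 :=
  (fragProd_le_partial hψr 0).trans (by simp)

/-- factorization: peel off the first factor. -/
lemma fragProd_factor (s : ℕ → ℝ) (x : ℝ) :
    fragProd ψ s x = fac ψ s x 0 * fragProd ψ (fun i => s (i + 1)) x := by
  have h1 : Tendsto (fun n => ∏ i ∈ Finset.range (n + 1), fac ψ s x i) atTop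
      (nhds (fragProd ψ s x)) := (tendsto_partial hψr).comp (tendsto_add_atTop_nat 1)
  have h2 : Tendsto (fun n => fac ψ s x 0 * ∏ i ∈ Finset.range n, fac ψ (fun i => s (i + 1)) x i)
      atTop (nhds (fac ψ s x 0 * fragProd ψ (fun i => s (i + 1)) x)) :=
    (tendsto_partial hψr).const_mul _
  refine tendsto_nhds_unique h1 ?_
  convert h2 using 2 with n
  rw [Finset.prod_range_succ']
  rw [mul_comm]
  congr 1

end Basic


section Ineq

/-- Weierstrass-type: `1 - ∏ aᵢ ≤ ∑ (1 - aᵢ)` for `aᵢ ∈ [0,1]`. -/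
lemma one_sub_prod_le_sum {ι : Type*} (F : Finset ι) (a : ι → ℝ)
    (h0 : ∀ i ∈ F, 0 ≤ a i) (h1 : ∀ i ∈ F, a i ≤ 1) :
    1 - ∏ i ∈ F, a i ≤ ∑ i ∈ F, (1 - a i) := by
  classical
  induction F using Finset.induction_on with
  | empty => simp
  | @insert j Fj hx ih =>
    rw [Finset.prod_insert hx, Finset.sum_insert hx]
    have hj0 := h0 j (Finset.mem_insert_self _ _)
    have hj1 := h1 j (Finset.mem_insert_self _ _)
    have h0' : ∀ i ∈ Fj, 0 ≤ a i := fun i hi => h0 i (Finset.mem_insert_of_mem hi)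
    have h1' : ∀ i ∈ Fj, a i ≤ 1 := fun i hi => h1 i (Finset.mem_insert_of_mem hi)
    have ihh := ih h0' h1'
    have hp0 : 0 ≤ ∏ i ∈ Fj, a i := Finset.prod_nonneg h0'
    have hp1 : ∏ i ∈ Fj, a i ≤ 1 := Finset.prod_le_one h0' h1'
    nlinarith

/-- `∏ aᵢ ≤ exp (-(∑ (1 - aᵢ)))` for `0 ≤ aᵢ`. -/
lemma prod_le_exp_neg_sum {ι : Type*} (F : Finset ι) (a : ι → ℝ)
    (h0 : ∀ i ∈ F, 0 ≤ a i) :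
    ∏ i ∈ F, a i ≤ Real.exp (-∑ i ∈ F, (1 - a i)) := by
  have : ∀ i ∈ F, a i ≤ Real.exp (-(1 - a i)) := by
    intro i _
    have := Real.add_one_le_exp (a i - 1)
    calc a i = (a i - 1) + 1 := by ring
      _ ≤ Real.exp (a i - 1) := this
      _ = Real.exp (-(1 - a i)) := by ring_nf
  calc ∏ i ∈ F, a i ≤ ∏ i ∈ F, Real.exp (-(1 - a i)) :=
        Finset.prod_le_prod h0 this
    _ = Real.exp (∑ i ∈ F, -(1 - a i)) := (Real.exp_sum F _).symm
    _ = Real.exp (-∑ i ∈ F, (1 - a i)) := by rw [← Finset.sum_neg_distrib]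

lemma one_sub_exp_pos : (0:ℝ) < 1 - Real.exp (-1) := by
  have : Real.exp (-1) < Real.exp 0 := Real.exp_lt_exp.2 (by norm_num)
  simp only [Real.exp_zero] at this
  linarith

/-- `min 1 t * (1 - e⁻¹) ≤ 1 - e^{-t}` for `t ≥ 0`. -/
lemma min_one_mul_le (t : ℝ) (ht : 0 ≤ t) :
    min 1 t * (1 - Real.exp (-1)) ≤ 1 - Real.exp (-t) := by
  rcases le_total t 1 with h | h
  · rw [min_eq_right h]
    have hc := convexOn_exp.2 (Set.mem_univ (0:ℝ)) (Set.mem_univ (-1:ℝ))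
      (by linarith : (0:ℝ) ≤ 1 - t) ht (by ring)
    simp only [smul_eq_mul, mul_zero, mul_neg, mul_one, zero_add, Real.exp_zero] at hc
    have : Real.exp (-t) ≤ (1 - t) + t * Real.exp (-1) := by
      linarith [hc]
    nlinarith
  · rw [min_eq_left h]
    have : Real.exp (-t) ≤ Real.exp (-1) := Real.exp_le_exp.2 (by linarith)
    linarith

end Ineq

section Gronwall

variable {ψ : ℝ → ℝ} {p : ℝ}
variable (hψr : ∀ x, 0 < ψ x ∧ ψ x ≤ 1) (hψC1 : ContDiff ℝ 1 ψ)
  (hψd : ∀ y, deriv ψ y ≤ (p + 1) * (1 - ψ y)) (hp : 0 < p + 1)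

include hψC1 hψd in
/-- Grönwall-type estimate: `1 - ψ` decreases at most exponentially fast. -/
lemma gronwall {y h : ℝ} (hh : 0 ≤ h) :
    1 - ψ (y - h) ≤ Real.exp ((p + 1) * h) * (1 - ψ y) := by
  have hdiff : Differentiable ℝ ψ := hψC1.differentiable one_ne_zero
  have hg : ∀ z : ℝ, HasDerivAt (fun y => Real.exp ((p + 1) * y) * (1 - ψ y))
      (Real.exp ((p + 1) * z) * (p + 1) * (1 - ψ z) + Real.exp ((p + 1) * z) * (-deriv ψ z)) z := by
    intro z
    have h1 : HasDerivAt (fun y : ℝ => (p + 1) * y) (p + 1) z := by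
      simpa using (hasDerivAt_id z).const_mul (p + 1)
    have h2 := h1.exp
    have h3 : HasDerivAt (fun y => 1 - ψ y) (-deriv ψ z) z := by
      exact ((hasDerivAt_const z (1:ℝ)).sub (hdiff z).hasDerivAt).congr_deriv (by simp)
    exact h2.mul h3
  have hmono : Monotone (fun y => Real.exp ((p + 1) * y) * (1 - ψ y)) := by
    apply monotone_of_deriv_nonneg
    · exact fun z => (hg z).differentiableAt
    · intro z
      rw [(hg z).deriv]
      have := hψd z
      nlinarith [Real.exp_pos ((p + 1) * z)]
  have key := hmono (by linarith : y - h ≤ y)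
  simp only at key
  have hA : (0:ℝ) < Real.exp ((p + 1) * (y - h)) := Real.exp_pos _
  have hE : Real.exp ((p + 1) * h) * Real.exp ((p + 1) * (y - h)) = Real.exp ((p + 1) * y) := by
    rw [← Real.exp_add]; ring_nf
  have key2 : Real.exp ((p + 1) * (y - h)) * (1 - ψ (y - h)) ≤
      Real.exp ((p + 1) * (y - h)) * (Real.exp ((p + 1) * h) * (1 - ψ y)) := by
    calc Real.exp ((p + 1) * (y - h)) * (1 - ψ (y - h))
        ≤ Real.exp ((p + 1) * y) * (1 - ψ y) := key
      _ = Real.exp ((p + 1) * (y - h)) * (Real.exp ((p + 1) * h) * (1 - ψ y)) := by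
          rw [← hE]; ring
  exact (mul_le_mul_iff_right₀ hA).1 key2

include hψr hψC1 hψd in
/-- Grönwall for factors: for `x ≤ x'`. -/
lemma fac_gronwall {s : ℕ → ℝ} {x x' : ℝ} (hxx : x ≤ x') (i : ℕ) :
    1 - fac ψ s x i ≤ Real.exp ((p + 1) * (x' - x)) * (1 - fac ψ s x' i) := by
  unfold fac
  split
  · simp
  · have : x - Real.log (s i) = (x' - Real.log (s i)) - (x' - x) := by ring
    rw [this]
    exact gronwall hψC1 hψd (by linarith)

include hψr in
lemma fac_mono_x (hm : Monotone ψ) {s : ℕ → ℝ} {x x' : ℝ} (hxx : x ≤ x') (i : ℕ) :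
    fac ψ s x i ≤ fac ψ s x' i := by
  unfold fac; split
  · exact le_refl 1
  · exact hm (by linarith)

include hψr hψC1 hψd hp in
/-- Key comparison: `1 - fragProd` at `x` is controlled by its value at `x' ≥ x`. -/
lemma comp_frag {s : ℕ → ℝ} {x x' : ℝ} (hxx : x ≤ x') :
    1 - fragProd ψ s x ≤
      (Real.exp ((p + 1) * (x' - x)) / (1 - Real.exp (-1))) * (1 - fragProd ψ s x') := by
  set K := Real.exp ((p + 1) * (x' - x)) with hK
  have hK1 : 1 ≤ K := Real.one_le_exp (by nlinarith)
  have hden := one_sub_exp_pos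
  have hFx' : fragProd ψ s x' ≤ 1 := fragProd_le_one hψr
  rw [fragProd_eq]
  have key : ∀ n : ℕ, 1 - (K / (1 - Real.exp (-1)) * (1 - fragProd ψ s x')) ≤
      ∏ i ∈ Finset.range n, fac ψ s x i := by
    intro n
    set S := ∑ i ∈ Finset.range n, (1 - fac ψ s x' i) with hS
    have hS0 : 0 ≤ S := Finset.sum_nonneg fun i _ => by linarith [fac_le_one hψr (s := s) (x := x') (i := i)]
    have step1 : 1 - ∏ i ∈ Finset.range n, fac ψ s x i ≤
        ∑ i ∈ Finset.range n, (1 - fac ψ s x i) :=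
      one_sub_prod_le_sum _ _ (fun i _ => (fac_pos hψr).le) (fun i _ => fac_le_one hψr)
    have step2 : ∑ i ∈ Finset.range n, (1 - fac ψ s x i) ≤ K * S := by
      rw [hS, Finset.mul_sum]
      exact Finset.sum_le_sum fun i _ => fac_gronwall hψr hψC1 hψd hxx i
    have step3 : 1 - ∏ i ∈ Finset.range n, fac ψ s x i ≤ 1 := by
      linarith [partial_pos hψr (s := s) (x := x) (n := n)]
    have hmin : 1 - ∏ i ∈ Finset.range n, fac ψ s x i ≤ min 1 (K * S) :=
      le_min step3 (step1.trans step2)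
    have step4 : min 1 (K * S) ≤ K * min 1 S := by
      rcases le_total S 1 with h | h
      · rw [min_eq_right h]
        exact (min_le_right _ _)
      · rw [min_eq_left h]
        calc min 1 (K * S) ≤ 1 := min_le_left _ _
          _ ≤ K * 1 := by linarith
    have step5 : min 1 S * (1 - Real.exp (-1)) ≤ 1 - Real.exp (-S) := min_one_mul_le S hS0
    have step6 : Real.exp (-S) ≥ ∏ i ∈ Finset.range n, fac ψ s x' i := by
      simpa [hS] using prod_le_exp_neg_sum (Finset.range n) (fac ψ s x')
        (fun i _ => (fac_pos hψr).le)
    have step7 : fragProd ψ s x' ≤ ∏ i ∈ Finset.range n, fac ψ s x' i :=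
      fragProd_le_partial hψr n
    -- combine
    have hfinal : 1 - ∏ i ∈ Finset.range n, fac ψ s x i ≤
        K / (1 - Real.exp (-1)) * (1 - fragProd ψ s x') := by
      have h5 : min 1 S ≤ (1 - Real.exp (-1))⁻¹ * (1 - Real.exp (-S)) := by
        rw [le_inv_mul_iff₀ hden, mul_comm]
        exact step5
      have h6 : 1 - Real.exp (-S) ≤ 1 - fragProd ψ s x' := by linarith
      calc 1 - ∏ i ∈ Finset.range n, fac ψ s x i ≤ K * min 1 S := hmin.trans step4
        _ ≤ K * ((1 - Real.exp (-1))⁻¹ * (1 - Real.exp (-S))) := by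
            apply mul_le_mul_of_nonneg_left h5 (by linarith)
        _ ≤ K * ((1 - Real.exp (-1))⁻¹ * (1 - fragProd ψ s x')) := by
            apply mul_le_mul_of_nonneg_left _ (by linarith)
            apply mul_le_mul_of_nonneg_left h6 (by positivity)
        _ = K / (1 - Real.exp (-1)) * (1 - fragProd ψ s x') := by ring
    linarith
  have := le_ciInf key
  linarith [this]

end Gronwall

section Cont

variable {ψ : ℝ → ℝ} {p : ℝ}
variable (hψr : ∀ x, 0 < ψ x ∧ ψ x ≤ 1) (hψC1 : ContDiff ℝ 1 ψ)
  (hψd : ∀ y, deriv ψ y ≤ (p + 1) * (1 - ψ y)) (hp : 0 < p + 1) (hψm : Monotone ψ)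

include hψC1 in
lemma fac_cont (s : ℕ → ℝ) (i : ℕ) : Continuous fun x => fac ψ s x i := by
  unfold fac
  by_cases h : s i = 0
  · simp only [h, if_pos rfl]; exact continuous_const
  · simp only [h, if_neg h]
    exact hψC1.continuous.comp (continuous_id.sub continuous_const)

include hψr hψC1 in
lemma partial_cont (s : ℕ → ℝ) (n : ℕ) :
    Continuous fun x => ∏ i ∈ Finset.range n, fac ψ s x i :=
  continuous_finset_prod _ fun i _ => fac_cont hψC1 s i

include hψr hψC1 hψd hψm in
/-- For every sequence `s`, the infinite product is a continuous function of `x`. -/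
lemma fragProd_cont (s : ℕ → ℝ) : Continuous fun x => fragProd ψ s x := by
  rw [continuous_iff_continuousAt]
  intro x₀
  by_cases hsum : Summable fun i => 1 - fac ψ s (x₀ - 1) i
  · -- uniform convergence on Ici (x₀ - 1)
    set g : ℕ → ℝ := fun i => 1 - fac ψ s (x₀ - 1) i with hg
    have hg0 : ∀ i, 0 ≤ g i := fun i => by
      simp only [hg]; linarith [fac_le_one hψr (s := s) (x := x₀ - 1) (i := i)]
    have hεto : Tendsto (fun n => ∑' i, g (i + n)) atTop (nhds 0) := by
      have h1 : ∀ n, ∑' i, g (i + n) = (∑' i, g i) - ∑ i ∈ Finset.range n, g i := by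
        intro n
        have := hsum.sum_add_tsum_nat_add n
        linarith
      simp only [h1]
      have h2 := hsum.hasSum.tendsto_sum_nat
      have := h2.const_sub (∑' i, g i)
      simpa using this
    have hunif : TendstoUniformlyOn
        (fun n x => ∏ i ∈ Finset.range n, fac ψ s x i) (fun x => fragProd ψ s x)
        atTop (Set.Ici (x₀ - 1)) := by
      rw [Metric.tendstoUniformlyOn_iff]
      intro δ hδ
      filter_upwards [hεto.eventually (eventually_lt_nhds hδ)] with n hn x hx
      -- key estimate : 0 ≤ P n x - F x ≤ ∑' i, g (i + n)
      have hle : ∀ m, n ≤ m → (∏ i ∈ Finset.range n, fac ψ s x i)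
          - (∏ i ∈ Finset.range m, fac ψ s x i) ≤ ∑' i, g (i + n) := by
        intro m hm
        have hsplit : (∏ i ∈ Finset.range n, fac ψ s x i) *
            ∏ i ∈ Finset.Ico n m, fac ψ s x i = ∏ i ∈ Finset.range m, fac ψ s x i :=
          Finset.prod_range_mul_prod_Ico _ hm
        have hQ1 : ∏ i ∈ Finset.Ico n m, fac ψ s x i ≤ 1 :=
          Finset.prod_le_one (fun i _ => (fac_pos hψr).le) fun i _ => fac_le_one hψr
        have hQ0 : 1 - ∏ i ∈ Finset.Ico n m, fac ψ s x i ≤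
            ∑ i ∈ Finset.Ico n m, (1 - fac ψ s x i) :=
          one_sub_prod_le_sum _ _ (fun i _ => (fac_pos hψr).le) fun i _ => fac_le_one hψr
        have hsum2 : ∑ i ∈ Finset.Ico n m, (1 - fac ψ s x i) ≤ ∑' i, g (i + n) := by
          have h3 : ∀ i ∈ Finset.Ico n m, 1 - fac ψ s x i ≤ g i := by
            intro i _
            have hmx := fac_mono_x (s := s) hψr hψm (show x₀ - 1 ≤ x by
              have := hx.out; linarith) i
            simp only [hg]
            linarith
          calc ∑ i ∈ Finset.Ico n m, (1 - fac ψ s x i) ≤ ∑ i ∈ Finset.Ico n m, g i :=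
                Finset.sum_le_sum h3
            _ = ∑ i ∈ Finset.range (m - n), g (n + i) := Finset.sum_Ico_eq_sum_range g n m
            _ = ∑ i ∈ Finset.range (m - n), g (i + n) := by
                apply Finset.sum_congr rfl; intro i _; rw [add_comm]
            _ ≤ ∑' i, g (i + n) := by
                apply Summable.sum_le_tsum _ (fun i _ => hg0 _) ((summable_nat_add_iff n).2 hsum)
        have hP0 : 0 ≤ ∏ i ∈ Finset.range n, fac ψ s x i := (partial_pos hψr).le
        have hP1 : ∏ i ∈ Finset.range n, fac ψ s x i ≤ 1 := partial_le_one hψr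
        nlinarith
      have hPF : (∏ i ∈ Finset.range n, fac ψ s x i) - fragProd ψ s x ≤ ∑' i, g (i + n) := by
        have htd : Tendsto (fun m => (∏ i ∈ Finset.range n, fac ψ s x i)
            - ∏ i ∈ Finset.range m, fac ψ s x i) atTop
            (nhds ((∏ i ∈ Finset.range n, fac ψ s x i) - fragProd ψ s x)) :=
          (tendsto_partial hψr).const_sub _
        exact le_of_tendsto htd (eventually_atTop.2 ⟨n, hle⟩)
      have hFP : fragProd ψ s x ≤ ∏ i ∈ Finset.range n, fac ψ s x i :=
        fragProd_le_partial hψr n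
      rw [Real.dist_eq, abs_sub_comm, abs_of_nonneg (by linarith)]
      linarith
    have hco : ContinuousOn (fun x => fragProd ψ s x) (Set.Ici (x₀ - 1)) :=
      hunif.continuousOn (Eventually.of_forall fun n => (partial_cont hψr hψC1 s n).continuousOn).frequently
    exact hco.continuousAt (Ici_mem_nhds (by linarith))
  · -- the product is identically 0
    have hzero : ∀ x, fragProd ψ s x = 0 := by
      intro x
      have hns : ¬ Summable fun i => 1 - fac ψ s x i := by
        intro hs
        apply hsum
        set Kx := max 1 (Real.exp ((p + 1) * (x - (x₀ - 1)))) with hKx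
        have hnn : ∀ i, (0:ℝ) ≤ 1 - fac ψ s (x₀ - 1) i := fun i => by
          linarith [fac_le_one hψr (s := s) (x := x₀ - 1) (i := i)]
        refine Summable.of_nonneg_of_le hnn (fun i => ?_) (hs.mul_left Kx)
        have hfle : fac ψ s x i ≤ 1 := fac_le_one hψr
        rcases le_total (x₀ - 1) x with h | h
        · have hgr := fac_gronwall (s := s) hψr hψC1 hψd h i
          have hKle : Real.exp ((p + 1) * (x - (x₀ - 1))) ≤ Kx := le_max_right _ _
          nlinarith
        · have hmx := fac_mono_x (s := s) hψr hψm h i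
          have hK1 : (1:ℝ) ≤ Kx := le_max_left _ _
          nlinarith
      have hdiv : Tendsto (fun n => ∑ i ∈ Finset.range n, (1 - fac ψ s x i)) atTop atTop := by
        have := (not_summable_iff_tendsto_nat_atTop_of_nonneg
          (fun i => by linarith [fac_le_one hψr (s := s) (x := x) (i := i)] :
            ∀ i, (0:ℝ) ≤ 1 - fac ψ s x i)).1 hns
        exact this
      have hub : ∀ n, ∏ i ∈ Finset.range n, fac ψ s x i ≤
          Real.exp (-∑ i ∈ Finset.range n, (1 - fac ψ s x i)) := fun n =>
        prod_le_exp_neg_sum _ _ fun i _ => (fac_pos hψr).le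
      have hto : Tendsto (fun n => ∏ i ∈ Finset.range n, fac ψ s x i) atTop (nhds 0) := by
        apply squeeze_zero (fun n => (partial_pos hψr).le) hub
        have : Tendsto (fun n => -∑ i ∈ Finset.range n, (1 - fac ψ s x i)) atTop atBot :=
          tendsto_neg_atBot_iff.2 hdiv
        exact Real.tendsto_exp_atBot.comp this
      exact tendsto_nhds_unique (tendsto_partial hψr) hto
    have : (fun x => fragProd ψ s x) = fun _ => 0 := funext hzero
    rw [this]
    exact continuousAt_const

end Cont

section Meas

variable {ψ : ℝ → ℝ}

lemma fragProd_meas (hψC1 : ContDiff ℝ 1 ψ) {X : Type*} [MeasurableSpace X]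
    (v : X → ℕ → ℝ) (hv : ∀ i, Measurable fun t => v t i) (x : ℝ) :
    Measurable fun t => fragProd ψ (v t) x := by
  simp only [fragProd_eq]
  apply Measurable.iInf
  intro n
  apply Finset.measurable_prod
  intro i _
  unfold fac
  have hms : MeasurableSet {t : X | v t i = 0} := (hv i) (measurableSet_singleton 0)
  apply Measurable.ite hms measurable_const
  exact hψC1.continuous.measurable.comp (measurable_const.sub ((Real.measurable_log).comp (hv i)))

end Meas

section Aux

variable {ψ : ℝ → ℝ} {p : ℝ}
variable (hψr : ∀ x, 0 < ψ x ∧ ψ x ≤ 1) (hψC1 : ContDiff ℝ 1 ψ)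
  (hψd : ∀ y, deriv ψ y ≤ (p + 1) * (1 - ψ y)) (hp : 0 < p + 1) (hψm : Monotone ψ)

include hψr hψm in
lemma fragProd_mono_x {s : ℕ → ℝ} {x x' : ℝ} (hxx : x ≤ x') :
    fragProd ψ s x ≤ fragProd ψ s x' := by
  rw [fragProd_eq, fragProd_eq]
  apply ciInf_mono ⟨0, fun y ⟨n, hn⟩ => hn ▸ (partial_pos hψr).le⟩
  intro n
  exact Finset.prod_le_prod (fun i _ => (fac_pos hψr).le)
    (fun i _ => fac_mono_x hψr hψm hxx i)

include hψC1 hψd hp hψm in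
/-- Mean value bound. -/
lemma mvt_bound {x t : ℝ} (hxt : x ≤ t) :
    ψ t - ψ x ≤ (p + 1) * (1 - ψ x) * (t - x) := by
  have hdiff : Differentiable ℝ ψ := hψC1.differentiable one_ne_zero
  set c := (p + 1) * (1 - ψ x) with hc
  have hu : ∀ z : ℝ, HasDerivAt (fun y => ψ y - c * y) (deriv ψ z - c) z := by
    intro z
    have h1 : HasDerivAt (fun y : ℝ => c * y) c z := by
      simpa using (hasDerivAt_id z).const_mul c
    exact (hdiff z).hasDerivAt.sub h1
  have hanti : AntitoneOn (fun y => ψ y - c * y) (Set.Ici x) := by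
    apply antitoneOn_of_deriv_nonpos (convex_Ici x)
    · exact (Continuous.continuousOn (by fun_prop))
    · intro z _
      exact ((hu z).differentiableAt).differentiableWithinAt
    · intro z hz
      rw [interior_Ici] at hz
      rw [(hu z).deriv]
      have h2 := hψd z
      have h3 : ψ x ≤ ψ z := hψm (le_of_lt hz)
      rw [hc]
      nlinarith
  have := hanti (Set.self_mem_Ici) (Set.mem_Ici.2 hxt) hxt
  simp only at this
  nlinarith [this]

lemma neg_log_le {t : ℝ} (ht : 0 < t) : -Real.log t ≤ (1 - t) / t := by
  have h1 : Real.log t⁻¹ ≤ t⁻¹ - 1 := Real.log_le_sub_one_of_pos (by positivity)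
  rw [Real.log_inv] at h1
  have h2 : t⁻¹ - 1 = (1 - t) / t := by field_simp
  linarith [h2 ▸ h1]

lemma Nabla1.s0_pos {s : ℕ → ℝ} (hs : s ∈ Nabla1) : 0 < s 0 := by
  rcases hs with ⟨h0, hmono, hsum⟩
  rcases (h0 0).lt_or_eq with h | h
  · exact h
  · exfalso
    have hz : ∀ i, s i = 0 := fun i => le_antisymm (h ▸ hmono 0 i (Nat.zero_le i)) (h0 i)
    have : HasSum (fun _ : ℕ => (0:ℝ)) 1 := by
      convert hsum using 1
      exact (funext hz).symm
    have h10 : (1:ℝ) = 0 := this.unique hasSum_zero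
    norm_num at h10

lemma Nabla1.le_one {s : ℕ → ℝ} (hs : s ∈ Nabla1) (i : ℕ) : s i ≤ 1 :=
  le_hasSum hs.2.2 i fun j _ => hs.1 j

include hψr hψm in
lemma fac0_eq {s : ℕ → ℝ} (hs : s ∈ Nabla1) (x : ℝ) :
    fac ψ s x 0 = ψ (x - Real.log (s 0)) := if_neg (Nabla1.s0_pos hs).ne'

include hψr hψm in
lemma psi_le_fac0 {s : ℕ → ℝ} (hs : s ∈ Nabla1) (x : ℝ) : ψ x ≤ fac ψ s x 0 := by
  rw [fac0_eq hψr hψm hs]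
  apply hψm
  have := Real.log_nonpos (Nabla1.s0_pos hs).le (Nabla1.le_one hs 0)
  linarith

include hψr in
lemma frag_le_fac0 {s : ℕ → ℝ} (x : ℝ) : fragProd ψ s x ≤ fac ψ s x 0 := by
  have := fragProd_le_partial hψr (s := s) (x := x) 1
  simpa using this

include hψr in
lemma fac0_sub_frag {s : ℕ → ℝ} (x : ℝ) :
    fac ψ s x 0 - fragProd ψ s x ≤ 1 - fragProd ψ (fun i => s (i + 1)) x := by
  have hfact := fragProd_factor hψr s x
  have h1 : fac ψ s x 0 ≤ 1 := fac_le_one hψr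
  have h2 : 0 ≤ fac ψ s x 0 := (fac_pos hψr).le
  have h3 : fragProd ψ (fun i => s (i + 1)) x ≤ 1 := fragProd_le_one hψr
  have h4 : 0 ≤ fragProd ψ (fun i => s (i + 1)) x := fragProd_nonneg hψr
  nlinarith [hfact]

include hψr hψC1 hψd hp hψm in
/-- bound on `fac0 - ψ x`, with splitting according to the size of `s 0`. -/
lemma fac0_sub_psi {s : ℕ → ℝ} (hs : s ∈ Nabla1) (x : ℝ) (c : ℝ)
    (hc : 2 * (p + 1) * (1 - ψ x) ≤ c) :
    fac ψ s x 0 - ψ x ≤ c * (1 - s 0) + (if s 0 ≤ 1/2 then (1:ℝ) else 0) := by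
  have hs0 := Nabla1.s0_pos hs
  have hs1 := Nabla1.le_one hs 0
  have hcnn : 0 ≤ c := le_trans (by nlinarith [(hψr x).2]) hc
  by_cases hhalf : s 0 ≤ 1/2
  · rw [if_pos hhalf]
    have h1 : fac ψ s x 0 ≤ 1 := fac_le_one hψr
    have h2 : 0 < ψ x := (hψr x).1
    nlinarith
  · rw [if_neg hhalf]
    push_neg at hhalf
    have hlog : 0 ≤ -Real.log (s 0) := by
      have := Real.log_nonpos hs0.le hs1; linarith
    have hmv : ψ (x - Real.log (s 0)) - ψ x ≤ (p + 1) * (1 - ψ x) * (-Real.log (s 0)) := by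
      have := mvt_bound hψC1 hψd hp hψm (show x ≤ x - Real.log (s 0) by linarith)
      calc ψ (x - Real.log (s 0)) - ψ x
          ≤ (p + 1) * (1 - ψ x) * ((x - Real.log (s 0)) - x) := this
        _ = (p + 1) * (1 - ψ x) * (-Real.log (s 0)) := by ring
    have hlog2 : -Real.log (s 0) ≤ 2 * (1 - s 0) := by
      have h1 := neg_log_le hs0
      have h2 : (1 - s 0) / s 0 ≤ 2 * (1 - s 0) := by
        rw [div_le_iff₀ hs0]
        nlinarith
      linarith
    rw [fac0_eq hψr hψm hs]
    have hψx1 : ψ x ≤ 1 := (hψr x).2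
    have hs01 : 0 ≤ 1 - s 0 := by linarith
    calc ψ (x - Real.log (s 0)) - ψ x ≤ (p + 1) * (1 - ψ x) * (-Real.log (s 0)) := hmv
      _ ≤ (p + 1) * (1 - ψ x) * (2 * (1 - s 0)) := by
          apply mul_le_mul_of_nonneg_left hlog2 (by nlinarith)
      _ = (2 * (p + 1) * (1 - ψ x)) * (1 - s 0) := by ring
      _ ≤ c * (1 - s 0) := mul_le_mul_of_nonneg_right hc hs01
      _ ≤ c * (1 - s 0) + 0 := by linarith

end Aux

theorem statement13 (ν : Measure Nabla1) [SigmaFinite ν]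
    (hcons : ∫⁻ s, ENNReal.ofReal (1 - (s : ℕ → ℝ) 0) ∂ν < ⊤)
    (p : ℝ) (hp : 0 < p + 1)
    (ψ : ℝ → ℝ) (hψC1 : ContDiff ℝ 1 ψ)
    (hψrange : ∀ x, 0 < ψ x ∧ ψ x ≤ 1) (hψmono : Monotone ψ)
    (hψlim : Tendsto ψ atTop (nhds 1))
    (hψderiv : ∀ y, deriv ψ y ≤ (p + 1) * (1 - ψ y))
    (ε C : ℝ) (hε : 0 < ε) (hεp : ε < p + 1) (hC : 0 < C)
    (htail : ∀ x, 1 - ψ x ≤ C * Real.exp (-((p + 1 - ε) * x)))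
    (hν : ∫⁻ s, ENNReal.ofReal (∑' i, (s : ℕ → ℝ) (i + 1) ^ (p + 1 - ε)) ∂ν < ⊤) :
    Continuous (fun x => ∫ s, (fragProd ψ (s : ℕ → ℝ) x - ψ x) ∂ν) ∧
    ∀ c : ℝ, Continuous
      (fun x => -c * deriv ψ x + ∫ s, (fragProd ψ (s : ℕ → ℝ) x - ψ x) ∂ν) := by
  have hψr := hψrange
  have hden := one_sub_exp_pos
  -- coordinate measurability
  have hv : ∀ i, Measurable fun s : Nabla1 => (s : ℕ → ℝ) i := fun i =>
    (measurable_pi_apply i).comp measurable_subtype_coe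
  have mF : ∀ x : ℝ, Measurable fun s : Nabla1 => fragProd ψ (s : ℕ → ℝ) x := fun x =>
    fragProd_meas hψC1 _ hv x
  have mR : ∀ x : ℝ, Measurable fun s : Nabla1 =>
      fragProd ψ (fun i => (s : ℕ → ℝ) (i + 1)) x := fun x =>
    fragProd_meas hψC1 _ (fun i => hv (i + 1)) x
  have mfac : ∀ x : ℝ, Measurable fun s : Nabla1 => fac ψ (s : ℕ → ℝ) x 0 := by
    intro x
    unfold fac
    have hms : MeasurableSet {s : Nabla1 | (s : ℕ → ℝ) 0 = 0} :=
      (hv 0) (measurableSet_singleton 0)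
    apply Measurable.ite hms measurable_const
    exact hψC1.continuous.measurable.comp
      (measurable_const.sub ((Real.measurable_log).comp (hv 0)))
  -- integrability of the `1 - s 0` pieces
  have hint1 : Integrable (fun s : Nabla1 => 1 - (s : ℕ → ℝ) 0) ν := by
    refine ⟨(measurable_const.sub (hv 0)).aestronglyMeasurable, ?_⟩
    rw [hasFiniteIntegral_iff_ofReal (Eventually.of_forall fun s => by
      simp only [Pi.zero_apply]
      linarith [Nabla1.le_one s.2 0])]
    exact hcons
  have hSmeas : MeasurableSet {s : Nabla1 | (s : ℕ → ℝ) 0 ≤ 1/2} :=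
    measurableSet_le (hv 0) measurable_const
  have hSfin : ν {s : Nabla1 | (s : ℕ → ℝ) 0 ≤ 1/2} < ⊤ := by
    have hsub : {s : Nabla1 | (s : ℕ → ℝ) 0 ≤ 1/2} ⊆
        {s : Nabla1 | ENNReal.ofReal (1/2) ≤ ENNReal.ofReal (1 - (s : ℕ → ℝ) 0)} := by
      intro s hs
      exact ENNReal.ofReal_le_ofReal (by linarith [hs.out])
    have hmark := mul_meas_ge_le_lintegral₀
      (μ := ν) (f := fun s : Nabla1 => ENNReal.ofReal (1 - (s : ℕ → ℝ) 0))
      ((measurable_const.sub (hv 0)).ennreal_ofReal.aemeasurable) (ENNReal.ofReal (1/2))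
    have hne : ENNReal.ofReal (1/2) ≠ 0 := by
      simp only [ne_eq, ENNReal.ofReal_eq_zero, not_le]; norm_num
    have hfin : ν {s : Nabla1 | ENNReal.ofReal (1/2) ≤ ENNReal.ofReal (1 - (s : ℕ → ℝ) 0)} < ⊤ := by
      by_contra htop
      rw [not_lt, top_le_iff] at htop
      rw [htop, ENNReal.mul_top hne] at hmark
      exact absurd (lt_of_le_of_lt hmark hcons) (lt_irrefl _)
    exact lt_of_le_of_lt (measure_mono hsub) hfin
  have hindint : Integrable (fun s : Nabla1 => if (s : ℕ → ℝ) 0 ≤ 1/2 then (1:ℝ) else 0) ν := by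
    have heq : (fun s : Nabla1 => if (s : ℕ → ℝ) 0 ≤ 1/2 then (1:ℝ) else 0) =
        Set.indicator {s : Nabla1 | (s : ℕ → ℝ) 0 ≤ 1/2} (fun _ => (1:ℝ)) := by
      ext s
      simp [Set.indicator_apply]
    rw [heq, integrable_indicator_iff hSmeas]
    exact integrableOn_const hSfin.ne
  have hint : ∀ c : ℝ, Integrable (fun s : Nabla1 =>
      c * (1 - (s : ℕ → ℝ) 0) + if (s : ℕ → ℝ) 0 ≤ 1/2 then (1:ℝ) else 0) ν :=
    fun c => (hint1.const_mul c).add hindint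
  -- the main continuity statement
  have hcont1 : Continuous (fun x => ∫ s, (fragProd ψ (s : ℕ → ℝ) x - ψ x) ∂ν) := by
    rw [continuous_iff_continuousAt]
    intro x₀
    by_cases hT : ∫⁻ s, ENNReal.ofReal
        (1 - fragProd ψ (fun i => (s : ℕ → ℝ) (i + 1)) (x₀ + 1)) ∂ν < ⊤
    · -- dominated convergence
      set K1 : ℝ := Real.exp ((p + 1) * 2) / (1 - Real.exp (-1)) with hK1def
      have hK1pos : 0 < K1 := by positivity
      set c₁ : ℝ := 2 * (p + 1) * (1 - ψ (x₀ - 1)) with hc₁def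
      have hc₁nn : 0 ≤ c₁ := by nlinarith [(hψr (x₀ - 1)).2]
      set Bd : Nabla1 → ℝ := fun s =>
        K1 * (1 - fragProd ψ (fun i => (s : ℕ → ℝ) (i + 1)) (x₀ + 1)) +
        (c₁ * (1 - (s : ℕ → ℝ) 0) + if (s : ℕ → ℝ) 0 ≤ 1/2 then (1:ℝ) else 0) with hBddef
      have hBint : Integrable Bd ν := by
        apply Integrable.add _ (hint c₁)
        refine ⟨((measurable_const.sub (mR (x₀ + 1))).const_mul K1).aestronglyMeasurable, ?_⟩
        rw [hasFiniteIntegral_iff_ofReal (Eventually.of_forall fun s => by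
          simp only [Pi.zero_apply]
          have := fragProd_le_one hψr (s := fun i => (s : ℕ → ℝ) (i + 1)) (x := x₀ + 1)
          nlinarith)]
        have hmeq : ∀ s : Nabla1, ENNReal.ofReal
            (K1 * (1 - fragProd ψ (fun i => (s : ℕ → ℝ) (i + 1)) (x₀ + 1))) =
            ENNReal.ofReal K1 * ENNReal.ofReal
            (1 - fragProd ψ (fun i => (s : ℕ → ℝ) (i + 1)) (x₀ + 1)) := fun s =>
          ENNReal.ofReal_mul hK1pos.le
        simp only [hmeq]
        rw [lintegral_const_mul _ ((Measurable.ennreal_ofReal (f := fun s : Nabla1 => 1 - fragProd ψ (fun i => (s : ℕ → ℝ) (i + 1)) (x₀ + 1)) (measurable_const.sub (mR (x₀ + 1)))))]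
        exact ENNReal.mul_lt_top ENNReal.ofReal_lt_top hT
      apply continuousAt_of_dominated (bound := Bd)
      · exact Eventually.of_forall fun x => ((mF x).sub measurable_const).aestronglyMeasurable
      · have hIoo : Set.Ioo (x₀ - 1) (x₀ + 1) ∈ nhds x₀ := Ioo_mem_nhds (by linarith) (by linarith)
        filter_upwards [hIoo] with x hx
        apply Eventually.of_forall
        intro s
        have hx1 : x₀ - 1 ≤ x := hx.1.le
        have hx2 : x ≤ x₀ + 1 := hx.2.le
        have h1 : fragProd ψ (s : ℕ → ℝ) x ≤ fac ψ (s : ℕ → ℝ) x 0 := frag_le_fac0 hψr x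
        have h2 : ψ x ≤ fac ψ (s : ℕ → ℝ) x 0 := psi_le_fac0 hψr hψmono s.2 x
        have hCineq : fac ψ (s : ℕ → ℝ) x 0 - fragProd ψ (s : ℕ → ℝ) x ≤
            1 - fragProd ψ (fun i => (s : ℕ → ℝ) (i + 1)) x := fac0_sub_frag hψr x
        have hcomp := comp_frag (s := fun i => (s : ℕ → ℝ) (i + 1)) hψr hψC1 hψderiv hp hx2
        have hCK : 1 - fragProd ψ (fun i => (s : ℕ → ℝ) (i + 1)) x ≤
            K1 * (1 - fragProd ψ (fun i => (s : ℕ → ℝ) (i + 1)) (x₀ + 1)) := by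
          have hRnn : 0 ≤ 1 - fragProd ψ (fun i => (s : ℕ → ℝ) (i + 1)) (x₀ + 1) := by
            linarith [fragProd_le_one hψr (s := fun i => (s : ℕ → ℝ) (i + 1)) (x := x₀ + 1)]
          have hexple : Real.exp ((p + 1) * (x₀ + 1 - x)) ≤ Real.exp ((p + 1) * 2) :=
            Real.exp_le_exp.2 (by nlinarith)
          calc 1 - fragProd ψ (fun i => (s : ℕ → ℝ) (i + 1)) x
              ≤ (Real.exp ((p + 1) * (x₀ + 1 - x)) / (1 - Real.exp (-1))) *
                (1 - fragProd ψ (fun i => (s : ℕ → ℝ) (i + 1)) (x₀ + 1)) := hcomp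
            _ ≤ K1 * (1 - fragProd ψ (fun i => (s : ℕ → ℝ) (i + 1)) (x₀ + 1)) := by
                apply mul_le_mul_of_nonneg_right _ hRnn
                rw [hK1def]
                gcongr
        have hD : fac ψ (s : ℕ → ℝ) x 0 - ψ x ≤
            c₁ * (1 - (s : ℕ → ℝ) 0) + (if (s : ℕ → ℝ) 0 ≤ 1/2 then (1:ℝ) else 0) := by
          apply fac0_sub_psi hψr hψC1 hψderiv hp hψmono s.2 x c₁
          rw [hc₁def]
          have : ψ (x₀ - 1) ≤ ψ x := hψmono hx1
          nlinarith
        have hBd1 : 0 ≤ K1 * (1 - fragProd ψ (fun i => (s : ℕ → ℝ) (i + 1)) (x₀ + 1)) := by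
          have := fragProd_le_one hψr (s := fun i => (s : ℕ → ℝ) (i + 1)) (x := x₀ + 1)
          nlinarith
        have hBd2 : 0 ≤ c₁ * (1 - (s : ℕ → ℝ) 0) + (if (s : ℕ → ℝ) 0 ≤ 1/2 then (1:ℝ) else 0) := by
          have hs1 := Nabla1.le_one s.2 0
          have : (0:ℝ) ≤ if (s : ℕ → ℝ) 0 ≤ 1/2 then (1:ℝ) else 0 := by positivity
          nlinarith
        rw [Real.norm_eq_abs, abs_le]
        constructor
        · rw [hBddef]; simp only [neg_le_sub_iff_le_add]
          nlinarith [hCineq, hCK]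
        · rw [hBddef]; simp only
          nlinarith [hD]
      · exact hBint
      · exact Eventually.of_forall fun s =>
          ((fragProd_cont hψr hψC1 hψderiv hψmono (s : ℕ → ℝ)).sub
            hψC1.continuous).continuousAt
    · -- the integrand is nowhere integrable; the integral is constant 0
      have hTtop : ∫⁻ s, ENNReal.ofReal
          (1 - fragProd ψ (fun i => (s : ℕ → ℝ) (i + 1)) (x₀ + 1)) ∂ν = ⊤ :=
        top_le_iff.1 (not_lt.1 hT)
      have hnint : ∀ x : ℝ, ¬ Integrable (fun s : Nabla1 =>
          fragProd ψ (s : ℕ → ℝ) x - ψ x) ν := by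
        intro x hInt
        have hψx := (hψr x).1
        -- step 1 : `fac0 - ψ x` is integrable
        have hg2 : Integrable (fun s : Nabla1 => fac ψ (s : ℕ → ℝ) x 0 - ψ x) ν := by
          apply Integrable.mono' (hint (2 * (p + 1) * (1 - ψ x)))
            ((mfac x).sub measurable_const).aestronglyMeasurable
          apply Eventually.of_forall
          intro s
          have h2 : ψ x ≤ fac ψ (s : ℕ → ℝ) x 0 := psi_le_fac0 hψr hψmono s.2 x
          rw [Real.norm_eq_abs, abs_of_nonneg (by simp only [Pi.sub_apply]; linarith)]
          exact fac0_sub_psi hψr hψC1 hψderiv hp hψmono s.2 x _ (le_refl _)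
        -- step 2 : `fac0 - fragProd` is integrable
        have h3 : Integrable (fun s : Nabla1 =>
            fac ψ (s : ℕ → ℝ) x 0 - fragProd ψ (s : ℕ → ℝ) x) ν := by
          have := hg2.sub hInt
          exact this.congr (Eventually.of_forall fun s => by simp only [Pi.sub_apply]; ring)
        -- step 3 : finiteness of the lintegral of `1 - R x`
        have h4 : ∫⁻ s, ENNReal.ofReal
            (1 - fragProd ψ (fun i => (s : ℕ → ℝ) (i + 1)) x) ∂ν < ⊤ := by
          have hpt : ∀ s : Nabla1, ENNReal.ofReal (ψ x) * ENNReal.ofReal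
              (1 - fragProd ψ (fun i => (s : ℕ → ℝ) (i + 1)) x) ≤
              (‖fac ψ (s : ℕ → ℝ) x 0 - fragProd ψ (s : ℕ → ℝ) x‖₊ : ENNReal) := by
            intro s
            rw [← ENNReal.ofReal_mul hψx.le, ← enorm_eq_nnnorm, Real.enorm_eq_ofReal_abs]
            apply ENNReal.ofReal_le_ofReal
            have hfact := fragProd_factor hψr (s : ℕ → ℝ) x
            have h2 : ψ x ≤ fac ψ (s : ℕ → ℝ) x 0 := psi_le_fac0 hψr hψmono s.2 x
            have h1 : fragProd ψ (s : ℕ → ℝ) x ≤ fac ψ (s : ℕ → ℝ) x 0 := frag_le_fac0 hψr x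
            have hR1 : fragProd ψ (fun i => (s : ℕ → ℝ) (i + 1)) x ≤ 1 :=
              fragProd_le_one hψr
            have hR0 : 0 ≤ fragProd ψ (fun i => (s : ℕ → ℝ) (i + 1)) x :=
              fragProd_nonneg hψr
            rw [abs_of_nonneg (by linarith)]
            nlinarith [hfact]
          have hfin2 : ∫⁻ s, ENNReal.ofReal (ψ x) * ENNReal.ofReal
              (1 - fragProd ψ (fun i => (s : ℕ → ℝ) (i + 1)) x) ∂ν < ⊤ :=
            lt_of_le_of_lt (lintegral_mono hpt) h3.hasFiniteIntegral
          rw [lintegral_const_mul _ ((Measurable.ennreal_ofReal (f := fun s : Nabla1 => 1 - fragProd ψ (fun i => (s : ℕ → ℝ) (i + 1)) x) (measurable_const.sub (mR x))))] at hfin2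
          have hne : ENNReal.ofReal (ψ x) ≠ 0 := by
            simp only [ne_eq, ENNReal.ofReal_eq_zero, not_le]; exact hψx
          by_contra htop
          rw [not_lt, top_le_iff] at htop
          rw [htop, ENNReal.mul_top hne] at hfin2
          exact absurd hfin2 (lt_irrefl _)
        -- step 4 : transfer to `x₀ + 1`, contradiction
        set K2 : ℝ := max 1 (Real.exp ((p + 1) * (x - (x₀ + 1)))) / (1 - Real.exp (-1))
          with hK2def
        have hK2nn : 0 ≤ K2 := by positivity
        have hptw : ∀ s : Nabla1,
            1 - fragProd ψ (fun i => (s : ℕ → ℝ) (i + 1)) (x₀ + 1) ≤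
            K2 * (1 - fragProd ψ (fun i => (s : ℕ → ℝ) (i + 1)) x) := by
          intro s
          rcases le_total (x₀ + 1) x with h | h
          · have hcomp := comp_frag (s := fun i => (s : ℕ → ℝ) (i + 1)) hψr hψC1 hψderiv hp h
            have hRnn : 0 ≤ 1 - fragProd ψ (fun i => (s : ℕ → ℝ) (i + 1)) x := by
              linarith [fragProd_le_one hψr (s := fun i => (s : ℕ → ℝ) (i + 1)) (x := x)]
            calc 1 - fragProd ψ (fun i => (s : ℕ → ℝ) (i + 1)) (x₀ + 1)
                ≤ (Real.exp ((p + 1) * (x - (x₀ + 1))) / (1 - Real.exp (-1))) *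
                  (1 - fragProd ψ (fun i => (s : ℕ → ℝ) (i + 1)) x) := hcomp
              _ ≤ K2 * (1 - fragProd ψ (fun i => (s : ℕ → ℝ) (i + 1)) x) := by
                  apply mul_le_mul_of_nonneg_right _ hRnn
                  rw [hK2def]
                  gcongr
                  exact le_max_right _ _
          · have hmono2 := fragProd_mono_x (s := fun i => (s : ℕ → ℝ) (i + 1)) hψr hψmono h
            have hK21 : (1:ℝ) ≤ K2 := by
              rw [hK2def, le_div_iff₀ hden]
              have : Real.exp (-1) > 0 := Real.exp_pos _
              calc (1:ℝ) * (1 - Real.exp (-1)) = 1 - Real.exp (-1) := one_mul _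
                _ ≤ 1 := by linarith
                _ ≤ max 1 (Real.exp ((p + 1) * (x - (x₀ + 1)))) := le_max_left _ _
            have hRnn : 0 ≤ 1 - fragProd ψ (fun i => (s : ℕ → ℝ) (i + 1)) x := by
              linarith [fragProd_le_one hψr (s := fun i => (s : ℕ → ℝ) (i + 1)) (x := x)]
            nlinarith
        have h5 : ∫⁻ s, ENNReal.ofReal
            (1 - fragProd ψ (fun i => (s : ℕ → ℝ) (i + 1)) (x₀ + 1)) ∂ν < ⊤ := by
          have hle : ∫⁻ s, ENNReal.ofReal
              (1 - fragProd ψ (fun i => (s : ℕ → ℝ) (i + 1)) (x₀ + 1)) ∂ν ≤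
              ∫⁻ s, ENNReal.ofReal K2 * ENNReal.ofReal
              (1 - fragProd ψ (fun i => (s : ℕ → ℝ) (i + 1)) x) ∂ν := by
            apply lintegral_mono
            intro s
            simp only [← ENNReal.ofReal_mul hK2nn]
            exact ENNReal.ofReal_le_ofReal (hptw s)
          rw [lintegral_const_mul (μ := ν) (ENNReal.ofReal K2)
            (f := fun s : Nabla1 => ENNReal.ofReal
              (1 - fragProd ψ (fun i => (s : ℕ → ℝ) (i + 1)) x))
            ((measurable_const.sub (mR x)).ennreal_ofReal)] at hle
          exact lt_of_le_of_lt hle (ENNReal.mul_lt_top ENNReal.ofReal_lt_top h4)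
        rw [hTtop] at h5
        exact absurd h5 (lt_irrefl _)
      have heq : (fun x => ∫ s, (fragProd ψ (s : ℕ → ℝ) x - ψ x) ∂ν) = fun _ => 0 :=
        funext fun x => integral_undef (hnint x)
      rw [heq]
      exact continuousAt_const
  exact ⟨hcont1, fun c =>
    (continuous_const.mul (hψC1.continuous_deriv le_rfl)).add hcont1⟩
end
end
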